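/- (Hammersley, estimation with integer-restricted parameters) Let σ > 0 and let x₁, …, x_n be real numbers with sample mean x̄ = (x₁ + ⋯ + x_n)/n. For m ∈ ℤ define the normal likelihood L(m) = ∏_{i=1}^{n} (σ√(2π))^{-1} exp(−(x_i − m)²/(2σ²)). Then an integer m maximizes L over ℤ if and only if |m − x̄| = min_{k ∈ ℤ} |k − x̄|; that is, the maximum likelihood estimator of an integer-valued normal mean with known variance is the integer nearest to the sample mean. -/

import Mathlib

open Real

/-- (Hammersley, estimation with integer-restricted parameters) For a normal
likelihood with known variance `σ²`, an integer `m` maximizes the likelihood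
over `ℤ` if and only if `m` is an integer nearest to the sample mean. -/
theorem integer_mle_nearest_integer
    (n : ℕ) (hn : 0 < n) (x : Fin n → ℝ) (σ : ℝ) (hσ : 0 < σ) (m : ℤ) :
    (∀ k : ℤ,
        (∏ i, (σ * Real.sqrt (2 * π))⁻¹ * Real.exp (-(x i - (k : ℝ)) ^ 2 / (2 * σ ^ 2))) ≤
        (∏ i, (σ * Real.sqrt (2 * π))⁻¹ * Real.exp (-(x i - (m : ℝ)) ^ 2 / (2 * σ ^ 2))))
    ↔
    (∀ k : ℤ,
        |(m : ℝ) - (∑ i, x i) / n| ≤ |(k : ℝ) - (∑ i, x i) / n|) := by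
  have hn0 : (0:ℝ) < n := by exact_mod_cast hn
  have hc : 0 < (σ * Real.sqrt (2 * π))⁻¹ := by positivity
  set S := ∑ i, x i with hS
  set Q := ∑ i, (x i)^2 with hQ
  have hprod : ∀ a : ℝ,
      (∏ i, (σ * Real.sqrt (2 * π))⁻¹ * Real.exp (-(x i - a) ^ 2 / (2 * σ ^ 2))) =
      (σ * Real.sqrt (2 * π))⁻¹ ^ n *
        Real.exp ((-(∑ i, (x i - a)^2)) / (2 * σ ^ 2)) := by
    intro a
    rw [Finset.prod_mul_distrib, Finset.prod_const, ← Real.exp_sum]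
    congr 1
    · simp
    rw [← Finset.sum_div, ← Finset.sum_neg_distrib]
  have hsum : ∀ a : ℝ, ∑ i, (x i - a)^2 = Q - 2*a*S + n*a^2 := by
    intro a
    have h : ∀ i, (x i - a)^2 = (x i)^2 - 2*a*(x i) + a^2 := fun i => by ring
    simp_rw [h, Finset.sum_add_distrib, Finset.sum_sub_distrib, ← Finset.mul_sum,
      Finset.sum_const, Finset.card_univ, Fintype.card_fin, nsmul_eq_mul]
    rfl
  refine forall_congr' fun k => ?_
  rw [hprod, hprod,
    mul_le_mul_iff_right₀ (pow_pos hc n), Real.exp_le_exp,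
    div_le_div_iff_of_pos_right (by positivity), neg_le_neg_iff, hsum, hsum]
  rw [← Real.sqrt_sq_eq_abs, ← Real.sqrt_sq_eq_abs,
    Real.sqrt_le_sqrt_iff (sq_nonneg _)]
  have key : ∀ a : ℝ, (a - S/n)^2 = (n*a - S)^2 / n^2 := fun a => by
    field_simp
  rw [key, key, div_le_div_iff_of_pos_right (by positivity)]
  constructor <;> intro h <;> nlinarith [h, hn0, mul_pos hn0 hn0]
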